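/- Let L be a code loop with basis B. Then the cardinality of the group Half(L) of all half-automorphisms of L equals the product of the cardinality of the automorphism group Aut(L) and the cardinality of the group H_B(L) of half-automorphisms fixing every element of B: |Half(L)| = |Aut(L)|·|H_B(L)|. -/

import Mathlib

/-- A loop: a binary operation with two-sided identity in which left and right
translations are bijections (equivalently, equations `a·x = b` and `y·a = b`
have unique solutions). -/
structure LoopStr (α : Type*) where
  mul : α → α → α
  one : α
  one_mul : ∀ x, mul one x = x
  mul_one : ∀ x, mul x one = x
  mulLeft_bij : ∀ a, Function.Bijective (fun x => mul a x)
  mulRight_bij : ∀ a, Function.Bijective (fun x => mul x a)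

namespace LoopStr

variable {α : Type*} (S : LoopStr α)

/-- A subset containing `1` and closed under multiplication and (left and right) inverses. -/
def IsClosed (T : Set α) : Prop :=
  S.one ∈ T ∧ (∀ x ∈ T, ∀ y ∈ T, S.mul x y ∈ T) ∧
    (∀ x ∈ T, ∀ y, S.mul x y = S.one → y ∈ T) ∧
    (∀ x ∈ T, ∀ y, S.mul y x = S.one → y ∈ T)

/-- The subloop generated by a set: the smallest closed subset containing it. -/
def gen (X : Set α) : Set α := ⋂₀ {T | X ⊆ T ∧ S.IsClosed T}

def Generates (X : Set α) : Prop := S.gen X = Set.univ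

/-- A basis: a minimal generating set. -/
def IsBasis (X : Set α) : Prop := S.Generates X ∧ ∀ Y ⊂ X, ¬ S.Generates Y

def IsHalfAut (f : α → α) : Prop :=
  Function.Bijective f ∧
    ∀ x y, f (S.mul x y) = S.mul (f x) (f y) ∨ f (S.mul x y) = S.mul (f y) (f x)

def IsAut (f : α → α) : Prop :=
  Function.Bijective f ∧ ∀ x y, f (S.mul x y) = S.mul (f x) (f y)

def IsAntiAut (f : α → α) : Prop :=
  Function.Bijective f ∧ ∀ x y, f (S.mul x y) = S.mul (f y) (f x)

/-- The commutant of a loop. -/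
def commutant : Set α := {c | ∀ x, S.mul c x = S.mul x c}

/-- The nucleus of a loop. -/
def nucleus : Set α :=
  {a | ∀ u v, S.mul (S.mul a u) v = S.mul a (S.mul u v) ∧
        S.mul (S.mul u a) v = S.mul u (S.mul a v) ∧
        S.mul (S.mul u v) a = S.mul u (S.mul v a)}

end LoopStr

/-- A code loop: a finite Moufang loop with a unique nontrivial square `neg` (written `-1`),
which (by Chein–Goodaire) is central of order 2, and all squares, commutators and
associators lie in `{1, neg}`. -/
structure CodeLoop (α : Type*) extends LoopStr α where
  finite : Finite α
  moufang : ∀ x y z, mul (mul x (mul z x)) y = mul x (mul z (mul x y))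
  neg : α
  neg_ne_one : neg ≠ one
  neg_is_square : ∃ x, mul x x = neg
  square_unique : ∀ m, m ≠ one → (∃ x, mul x x = m) → m = neg
  neg_mul_comm : ∀ x, mul neg x = mul x neg
  neg_mul_assoc₁ : ∀ x y, mul (mul neg x) y = mul neg (mul x y)
  neg_mul_assoc₂ : ∀ x y, mul (mul x neg) y = mul x (mul neg y)
  neg_mul_assoc₃ : ∀ x y, mul (mul x y) neg = mul x (mul y neg)
  neg_neg : mul neg neg = one
  square_mem : ∀ x, mul x x = one ∨ mul x x = neg
  comm_mem : ∀ x y, mul x y = mul y x ∨ mul x y = mul (mul y x) neg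
  assoc_mem : ∀ x y z, mul (mul x y) z = mul x (mul y z) ∨
      mul (mul x y) z = mul (mul x (mul y z)) neg

/-- The left-normed product `a_σ` of the basis elements indexed by `σ`, in increasing order. -/
def aSig {α : Type*} (S : LoopStr α) {n : ℕ} (a : Fin n → α) (σ : Finset (Fin n)) : α :=
  ((σ.sort (· ≤ ·)).map a).foldl S.mul S.one


namespace CodeLoop
open List

variable {α : Type*}

section
variable (C : CodeLoop α)

local infixl:70 " ⊛ " => C.mul

lemma lcancel {a x y : α} (h : a ⊛ x = a ⊛ y) : x = y := (C.mulLeft_bij a).1 h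

lemma rcancel {a x y : α} (h : x ⊛ a = y ⊛ a) : x = y := (C.mulRight_bij a).1 h

/-- twist by `(-1)^b` -/
def tw (x : α) (b : Bool) : α := bif b then x ⊛ C.neg else x

@[simp] lemma tw_false (x : α) : C.tw x false = x := rfl
@[simp] lemma tw_true (x : α) : C.tw x true = x ⊛ C.neg := rfl

lemma tw_tw (x : α) (a b : Bool) : C.tw (C.tw x a) b = C.tw x (xor a b) := by
  cases a <;> cases b <;> simp only [tw_false, tw_true, Bool.xor_false, Bool.xor_true,
    Bool.false_xor, Bool.true_xor, Bool.not_true, Bool.not_false]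
  rw [C.neg_mul_assoc₃, C.neg_neg, C.mul_one]

lemma mul_tw (x y : α) (b : Bool) : x ⊛ C.tw y b = C.tw (x ⊛ y) b := by
  cases b
  · rfl
  · simp only [tw_true]; rw [C.neg_mul_assoc₃]

lemma tw_mul (x y : α) (b : Bool) : C.tw x b ⊛ y = C.tw (x ⊛ y) b := by
  cases b
  · rfl
  · simp only [tw_true]
    rw [C.neg_mul_assoc₂, C.neg_mul_comm, ← C.neg_mul_assoc₃]

lemma tw_cancel {x : α} {a b : Bool} (h : C.tw x a = C.tw x b) : a = b := by
  cases a <;> cases b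
  · rfl
  · simp only [tw_false, tw_true] at h
    exact absurd (C.lcancel (show x ⊛ C.one = x ⊛ C.neg by rw [C.mul_one, ← h])).symm
      C.neg_ne_one
  · simp only [tw_false, tw_true] at h
    exact absurd (C.lcancel (show x ⊛ C.one = x ⊛ C.neg by rw [C.mul_one, h])).symm
      C.neg_ne_one
  · rfl

lemma tw_base_cancel {x y : α} {a : Bool} (h : C.tw x a = C.tw y a) : x = y := by
  cases a
  · exact h
  · exact C.rcancel h

lemma tw_swap {x y : α} {a : Bool} (h : x = C.tw y a) : y = C.tw x a := by
  subst h; rw [C.tw_tw]; cases a <;> rfl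

lemma sq_tw (x : α) (a : Bool) : C.tw x a ⊛ C.tw x a = x ⊛ x := by
  cases a
  · rfl
  · simp only [tw_true]
    rw [show (x ⊛ C.neg) ⊛ (x ⊛ C.neg) = C.tw ((x ⊛ C.neg) ⊛ x) true from C.mul_tw _ x true,
      show (x ⊛ C.neg) ⊛ x = C.tw (x ⊛ x) true by
        rw [C.neg_mul_assoc₂, C.neg_mul_comm, ← C.neg_mul_assoc₃]; rfl,
      C.tw_tw]
    rfl

end
end CodeLoop
namespace CodeLoop
open List

variable {α : Type*}

section
variable (C : CodeLoop α)

local infixl:70 " ⊛ " => C.mul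

open scoped Classical in
/-- associator indicator -/
noncomputable def Av (x y z : α) : Bool := if (x ⊛ y) ⊛ z = x ⊛ (y ⊛ z) then false else true

open scoped Classical in
/-- commutator indicator -/
noncomputable def Cv (x y : α) : Bool := if x ⊛ y = y ⊛ x then false else true

lemma av_spec (x y z : α) : (x ⊛ y) ⊛ z = C.tw (x ⊛ (y ⊛ z)) (C.Av x y z) := by
  classical
  unfold Av
  split
  · next h => simpa using h
  · next h =>
    rcases C.assoc_mem x y z with h1 | h2
    · exact absurd h1 h
    · simpa using h2

lemma av_of_eq {x y z : α} (h : (x ⊛ y) ⊛ z = x ⊛ (y ⊛ z)) : C.Av x y z = false := by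
  classical
  unfold Av; simp [h]

lemma cv_spec (x y : α) : x ⊛ y = C.tw (y ⊛ x) (C.Cv x y) := by
  classical
  unfold Cv
  split
  · next h => simpa using h
  · next h =>
    rcases C.comm_mem x y with h1 | h2
    · exact absurd h1 h
    · simpa using h2

lemma cv_of_eq {x y : α} (h : x ⊛ y = y ⊛ x) : C.Cv x y = false := by
  classical
  unfold Cv; simp [h]

lemma av_congr {x y z x' y' z' : α}
    (h : ((x' ⊛ y') ⊛ z' = x' ⊛ (y' ⊛ z')) ↔ ((x ⊛ y) ⊛ z = x ⊛ (y ⊛ z))) :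
    C.Av x' y' z' = C.Av x y z := by
  classical
  unfold Av
  exact if_congr h rfl rfl

lemma cv_congr {x y x' y' : α} (h : (x' ⊛ y' = y' ⊛ x') ↔ (x ⊛ y = y ⊛ x)) :
    C.Cv x' y' = C.Cv x y := by
  classical
  unfold Cv
  exact if_congr h rfl rfl

lemma tw_eq_tw_iff (x y : α) (b : Bool) : C.tw x b = C.tw y b ↔ x = y :=
  ⟨C.tw_base_cancel, fun h => by rw [h]⟩

lemma av_tw₁ (x y z : α) (b : Bool) : C.Av (C.tw x b) y z = C.Av x y z := by
  apply C.av_congr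
  rw [C.tw_mul, C.tw_mul, C.tw_mul, C.tw_eq_tw_iff]

lemma av_tw₂ (x y z : α) (b : Bool) : C.Av x (C.tw y b) z = C.Av x y z := by
  apply C.av_congr
  rw [C.mul_tw, C.tw_mul, C.tw_mul, C.mul_tw, C.tw_eq_tw_iff]

lemma av_tw₃ (x y z : α) (b : Bool) : C.Av x y (C.tw z b) = C.Av x y z := by
  apply C.av_congr
  rw [C.mul_tw, C.mul_tw, C.mul_tw, C.tw_eq_tw_iff]

lemma cv_tw₁ (x y : α) (b : Bool) : C.Cv (C.tw x b) y = C.Cv x y := by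
  apply C.cv_congr
  rw [C.tw_mul, C.mul_tw, C.tw_eq_tw_iff]

lemma cv_tw₂ (x y : α) (b : Bool) : C.Cv x (C.tw y b) = C.Cv x y := by
  apply C.cv_congr
  rw [C.tw_mul, C.mul_tw, C.tw_eq_tw_iff]

lemma bool_xor_false {a b : Bool} (h : false = xor a b) : b = a := by
  revert h; cases a <;> cases b <;> decide

lemma bool_helper5 {a c1 c2 c3 e : Bool}
    (h : false = xor c3 (xor e (xor c2 (xor e (xor c1 a))))) :
    a = xor c3 (xor c2 c1) := by
  revert h; cases a <;> cases c1 <;> cases c2 <;> cases c3 <;> cases e <;> decide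

/-- left alternative law (from the Moufang identity with `z := 1`). -/
lemma LA (x y : α) : (x ⊛ x) ⊛ y = x ⊛ (x ⊛ y) := by
  have := C.moufang x y C.one
  rwa [C.one_mul, C.one_mul] at this

lemma av_self_left (x y : α) : C.Av x x y = false := C.av_of_eq (C.LA x y)

lemma av_sq_left (x y z : α) : C.Av (x ⊛ x) y z = false := by
  rcases C.square_mem x with h | h <;> rw [h]
  · exact C.av_of_eq (by rw [C.one_mul, C.one_mul])
  · exact C.av_of_eq (C.neg_mul_assoc₁ y z)

/-- The Moufang identity in associator form: `A(x, z*x, y) = A(z, x, y)`. -/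
lemma av_moufang (x z y : α) : C.Av x (z ⊛ x) y = C.Av z x y := by
  have M := C.moufang x y z
  -- LHS : (x ⊛ (z ⊛ x)) ⊛ y
  have h1 : (x ⊛ (z ⊛ x)) ⊛ y = C.tw (x ⊛ ((z ⊛ x) ⊛ y)) (C.Av x (z ⊛ x) y) :=
    C.av_spec x (z ⊛ x) y
  have h2 : (z ⊛ x) ⊛ y = C.tw (z ⊛ (x ⊛ y)) (C.Av z x y) := C.av_spec z x y
  rw [h2, C.mul_tw] at h1
  rw [M, C.tw_tw] at h1
  exact bool_xor_false (C.tw_cancel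
    (show C.tw (x ⊛ (z ⊛ (x ⊛ y))) false = _ from by simpa using h1))

/-- adding the first argument to the second does not change the associator. -/
lemma av_add₂ (x y z : α) : C.Av x (x ⊛ y) z = C.Av x y z := by
  -- expand ((x*x)*y)*z two ways
  have pathA : ((x ⊛ x) ⊛ y) ⊛ z = x ⊛ (x ⊛ (y ⊛ z)) := by
    have h1 : (x ⊛ x) ⊛ (y ⊛ z) = x ⊛ (x ⊛ (y ⊛ z)) := C.LA x (y ⊛ z)
    have h2 := C.av_spec (x ⊛ x) y z
    rw [C.av_sq_left] at h2
    simpa [h1] using h2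
  have pathB : ((x ⊛ x) ⊛ y) ⊛ z
      = C.tw (x ⊛ (x ⊛ (y ⊛ z))) (xor (C.Av x y z) (C.Av x (x ⊛ y) z)) := by
    rw [C.LA x y]
    rw [C.av_spec x (x ⊛ y) z, C.av_spec x y z, C.mul_tw, C.tw_tw]
  rw [pathA] at pathB
  exact bool_xor_false (C.tw_cancel
    (show C.tw (x ⊛ (x ⊛ (y ⊛ z))) false = _ from by simpa using pathB))

/-- symmetry of the associator in its first two slots. -/
lemma av_swap₁₂ (x y z : α) : C.Av y x z = C.Av x y z := by
  have h1 : C.Av x (y ⊛ x) z = C.Av y x z := C.av_moufang x y z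
  have h2 : y ⊛ x = C.tw (x ⊛ y) (C.Cv y x) := C.cv_spec y x
  rw [h2, C.av_tw₂, C.av_add₂] at h1
  exact h1.symm

/-- the associator is determined by commutators: `A(x,y,z) = C(xy,z) + C(x,z) + C(y,z)`. -/
lemma av_eq_cv (x y z : α) :
    C.Av x y z = xor (C.Cv (x ⊛ y) z) (xor (C.Cv x z) (C.Cv y z)) := by
  -- chain from (x*y)*z around to z*(x*y)
  have e1 : (x ⊛ y) ⊛ z = C.tw (x ⊛ (y ⊛ z)) (C.Av x y z) := C.av_spec x y z
  have e2 : x ⊛ (y ⊛ z) = C.tw (x ⊛ (z ⊛ y)) (C.Cv y z) := by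
    rw [C.cv_spec y z, C.mul_tw]
  have e3' : x ⊛ (z ⊛ y) = C.tw ((x ⊛ z) ⊛ y) (C.Av x z y) := by
    have h := C.av_spec x z y
    have := C.tw_swap h
    exact this
  have e4 : (x ⊛ z) ⊛ y = C.tw ((z ⊛ x) ⊛ y) (C.Cv x z) := by
    rw [C.cv_spec x z, C.tw_mul]
  have e5 : (z ⊛ x) ⊛ y = C.tw (z ⊛ (x ⊛ y)) (C.Av z x y) := C.av_spec z x y
  have e6 : z ⊛ (x ⊛ y) = C.tw ((x ⊛ y) ⊛ z) (C.Cv (x ⊛ y) z) := by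
    have h := C.cv_spec (x ⊛ y) z
    exact C.tw_swap h
  rw [e2, e3', e4, e5, e6] at e1
  rw [C.tw_tw, C.tw_tw, C.tw_tw, C.tw_tw, C.tw_tw] at e1
  have hc := C.tw_cancel (x := (x ⊛ y) ⊛ z)
    (show C.tw _ false = _ from by simpa using e1)
  rw [C.av_swap₁₂ x z y] at hc
  exact bool_helper5 hc

end
end CodeLoop
namespace CodeLoop
open List

variable {α : Type*}

section
variable (C : CodeLoop α)

local infixl:70 " ⊛ " => C.mul

variable {f : α → α}

lemma half_one (hf : C.toLoopStr.IsHalfAut f) : f C.one = C.one := by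
  have h := hf.2 C.one C.one
  rw [C.one_mul] at h
  have : f C.one = f C.one ⊛ f C.one := by rcases h with h | h <;> exact h
  have h2 : f C.one ⊛ f C.one = f C.one ⊛ C.one := by rw [C.mul_one, ← this]
  exact (C.lcancel h2.symm).symm

lemma half_sq (hf : C.toLoopStr.IsHalfAut f) (x : α) : f (x ⊛ x) = f x ⊛ f x := by
  rcases hf.2 x x with h | h <;> exact h

lemma half_neg (hf : C.toLoopStr.IsHalfAut f) : f C.neg = C.neg := by
  obtain ⟨x, hx⟩ := C.neg_is_square
  have h : f C.neg = f x ⊛ f x := by rw [← hx]; exact C.half_sq hf x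
  rcases C.square_mem (f x) with h1 | h1
  · exfalso
    rw [h1, ← C.half_one hf] at h
    exact C.neg_ne_one (hf.1.1 h)
  · rw [h, h1]

lemma half_rel_mul (hf : C.toLoopStr.IsHalfAut f) (x y : α) :
    ∃ β, f x ⊛ f y = C.tw (f (x ⊛ y)) β := by
  rcases hf.2 x y with h | h
  · exact ⟨false, by simp [h]⟩
  · refine ⟨C.Cv (f x) (f y), ?_⟩
    rw [h]
    exact C.cv_spec (f x) (f y)

/-- `x'` lies in the same central class as `f x`. -/
def Rel (fn : α → α) (x' x : α) : Prop := ∃ β, x' = C.tw (fn x) β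

lemma rel_self (x : α) : C.Rel f (f x) x := ⟨false, rfl⟩

lemma rel_mul (hf : C.toLoopStr.IsHalfAut f) {x' x y' y : α}
    (hx : C.Rel f x' x) (hy : C.Rel f y' y) : C.Rel f (x' ⊛ y') (x ⊛ y) := by
  obtain ⟨a, ha⟩ := hx
  obtain ⟨b, hb⟩ := hy
  obtain ⟨c, hc⟩ := C.half_rel_mul hf x y
  refine ⟨xor (xor a b) c, ?_⟩
  rw [ha, hb, C.tw_mul, C.mul_tw, C.tw_tw, hc, C.tw_tw]
  congr 1
  cases a <;> cases b <;> cases c <;> decide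

/-- half-automorphisms preserve commutativity (one direction is a finiteness argument). -/
lemma cv_pres (hf : C.toLoopStr.IsHalfAut f) (x y : α) : C.Cv (f x) (f y) = C.Cv x y := by
  haveI : Finite α := C.finite
  -- direction A: if the images commute, so do the originals
  have dirA : ∀ a b : α, f a ⊛ f b = f b ⊛ f a → a ⊛ b = b ⊛ a := by
    intro a b hab
    by_contra hne
    apply hne
    apply hf.1.1
    have h1 : f (a ⊛ b) = f a ⊛ f b := by
      rcases hf.2 a b with h | h
      · exact h
      · rw [h, hab]
    have h2 : f (b ⊛ a) = f a ⊛ f b := by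
      rcases hf.2 b a with h | h
      · rw [h, ← hab]
      · exact h
    rw [h1, h2]
  -- direction B by counting
  have dirB : ∀ a b : α, a ⊛ b = b ⊛ a → f a ⊛ f b = f b ⊛ f a := by
    intro a b hab
    by_contra hne
    set N := {p : α × α // ¬ (p.1 ⊛ p.2 = p.2 ⊛ p.1)} with hN
    have Fmap : ∀ p : N, ¬ (f p.1.1 ⊛ f p.1.2 = f p.1.2 ⊛ f p.1.1) := by
      intro p hp
      exact p.2 (dirA _ _ hp)
    let F : N → N := fun p => ⟨(f p.1.1, f p.1.2), Fmap p⟩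
    have Finj : Function.Injective F := by
      intro p q hpq
      have h1 : f p.1.1 = f q.1.1 := congrArg (Prod.fst ∘ Subtype.val) hpq
      have h2 : f p.1.2 = f q.1.2 := congrArg (Prod.snd ∘ Subtype.val) hpq
      apply Subtype.ext
      exact Prod.ext (hf.1.1 h1) (hf.1.1 h2)
    have Fsurj : Function.Surjective F := (Finite.injective_iff_surjective).mp Finj
    obtain ⟨⟨⟨a', b'⟩, hab'⟩, hF⟩ := Fsurj ⟨(f a, f b), hne⟩
    have h1 : f a' = f a := congrArg (Prod.fst ∘ Subtype.val) hF
    have h2 : f b' = f b := congrArg (Prod.snd ∘ Subtype.val) hF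
    rw [hf.1.1 h1, hf.1.1 h2] at hab'
    exact hab' hab
  cases hcv : C.Cv x y
  · apply C.cv_of_eq (dirB x y ?_)
    have hs := C.cv_spec x y
    rw [hcv] at hs
    simpa using hs
  · cases hcv' : C.Cv (f x) (f y)
    · exfalso
      have hs := C.cv_spec (f x) (f y)
      rw [hcv'] at hs
      have hcomm : f x ⊛ f y = f y ⊛ f x := by simpa using hs
      have hfalse := C.cv_of_eq (dirA x y hcomm)
      rw [hfalse] at hcv
      exact Bool.false_ne_true hcv
    · rfl

lemma cv_pres_rel (hf : C.toLoopStr.IsHalfAut f) {x' x y' y : α}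
    (hx : C.Rel f x' x) (hy : C.Rel f y' y) : C.Cv x' y' = C.Cv x y := by
  obtain ⟨a, ha⟩ := hx
  obtain ⟨b, hb⟩ := hy
  rw [ha, hb, C.cv_tw₁, C.cv_tw₂, C.cv_pres hf]

lemma av_pres_rel (hf : C.toLoopStr.IsHalfAut f) {x' x y' y z' z : α}
    (hx : C.Rel f x' x) (hy : C.Rel f y' y) (hz : C.Rel f z' z) :
    C.Av x' y' z' = C.Av x y z := by
  rw [C.av_eq_cv, C.av_eq_cv x y z]
  rw [C.cv_pres_rel hf (C.rel_mul hf hx hy) hz, C.cv_pres_rel hf hx hz,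
    C.cv_pres_rel hf hy hz]

lemma half_tw (hf : C.toLoopStr.IsHalfAut f) (x : α) (b : Bool) :
    f (C.tw x b) = C.tw (f x) b := by
  cases b
  · rfl
  · simp only [tw_true]
    rcases hf.2 x C.neg with h | h
    · rw [h, C.half_neg hf]
    · rw [h, C.half_neg hf, C.neg_mul_comm]

end
end CodeLoop
namespace CodeLoop
open List

variable {α : Type*}

section
variable (C : CodeLoop α)

local infixl:70 " ⊛ " => C.mul

variable {f : α → α}

/-- right-normed product of a list -/
def pl (s : List α) : α := s.foldr C.mul C.one

@[simp] lemma pl_nil : C.pl ([] : List α) = C.one := rfl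
@[simp] lemma pl_cons (a : α) (s : List α) : C.pl (a :: s) = a ⊛ C.pl s := rfl

lemma pcl (hf : C.toLoopStr.IsHalfAut f) (s : List α) :
    C.Rel f (C.pl (s.map f)) (C.pl s) := by
  induction s with
  | nil => exact ⟨false, by simp [C.half_one hf]⟩
  | cons a s ih =>
    simpa using C.rel_mul hf (C.rel_self a) ih

lemma merge (hf : C.toLoopStr.IsHalfAut f) (l : List α) :
    ∀ s t : List α, s <+ l → t <+ l →
      ∃ u, u <+ l ∧ ∃ δ : Bool,
        C.pl s ⊛ C.pl t = C.tw (C.pl u) δ ∧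
        C.pl (s.map f) ⊛ C.pl (t.map f) = C.tw (C.pl (u.map f)) δ := by
  induction l with
  | nil =>
    intro s t hs ht
    rw [List.sublist_nil.mp hs, List.sublist_nil.mp ht]
    exact ⟨[], List.Sublist.refl _, false, by simp [C.one_mul], by simp [C.one_mul]⟩
  | cons b l₀ IH =>
    intro s t hs ht
    cases hs with
    | cons _ hs' =>
      cases ht with
      | cons _ ht' =>
        obtain ⟨u, hu, δ, h1, h2⟩ := IH s t hs' ht'
        exact ⟨u, hu.cons b, δ, h1, h2⟩
      | cons_cons _ ht' =>
        -- s <+ l₀, t = b :: t₀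
        rename_i t₀
        obtain ⟨u₀, hu₀, δ₀, h1, h2⟩ := IH s t₀ hs' ht'
        refine ⟨b :: u₀, hu₀.cons₂ b, xor (xor (xor δ₀ (C.Av b (C.pl s) (C.pl t₀)))
          (C.Cv (C.pl s) b)) (C.Av (C.pl s) b (C.pl t₀)), ?_, ?_⟩
        · show C.pl s ⊛ (b ⊛ C.pl t₀) = _
          rw [C.tw_swap (C.av_spec (C.pl s) b (C.pl t₀)), C.cv_spec (C.pl s) b, C.tw_mul,
            C.av_spec b (C.pl s) (C.pl t₀), h1, C.mul_tw, C.tw_tw, C.tw_tw, C.tw_tw]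
          simp only [pl_cons, List.map_cons, Bool.xor_assoc]
        · show C.pl (s.map f) ⊛ (f b ⊛ C.pl (t₀.map f)) = _
          rw [C.tw_swap (C.av_spec (C.pl (s.map f)) (f b) (C.pl (t₀.map f))),
            C.cv_spec (C.pl (s.map f)) (f b), C.tw_mul,
            C.av_spec (f b) (C.pl (s.map f)) (C.pl (t₀.map f)), h2, C.mul_tw,
            C.tw_tw, C.tw_tw, C.tw_tw,
            C.av_pres_rel hf (C.rel_self b) (C.pcl hf s) (C.pcl hf t₀),
            C.cv_pres_rel hf (C.pcl hf s) (C.rel_self b),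
            C.av_pres_rel hf (C.pcl hf s) (C.rel_self b) (C.pcl hf t₀)]
          simp only [pl_cons, List.map_cons, Bool.xor_assoc]
    | cons_cons _ hs' =>
      rename_i s₀
      cases ht with
      | cons _ ht' =>
        -- s = b :: s₀, t <+ l₀
        obtain ⟨u₀, hu₀, δ₀, h1, h2⟩ := IH s₀ t hs' ht'
        refine ⟨b :: u₀, hu₀.cons₂ b, xor δ₀ (C.Av b (C.pl s₀) (C.pl t)), ?_, ?_⟩
        · show (b ⊛ C.pl s₀) ⊛ C.pl t = _
          rw [C.av_spec b (C.pl s₀) (C.pl t), h1, C.mul_tw, C.tw_tw]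
          simp only [pl_cons, List.map_cons, Bool.xor_assoc]
        · show (f b ⊛ C.pl (s₀.map f)) ⊛ C.pl (t.map f) = _
          rw [C.av_spec (f b) (C.pl (s₀.map f)) (C.pl (t.map f)), h2, C.mul_tw, C.tw_tw,
            C.av_pres_rel hf (C.rel_self b) (C.pcl hf s₀) (C.pcl hf t)]
          simp only [pl_cons, List.map_cons, Bool.xor_assoc]
      | cons_cons _ ht' =>
        -- s = b :: s₀, t = b :: t₀
        rename_i t₀
        obtain ⟨u₀, hu₀, δ₀, h1, h2⟩ := IH s₀ t₀ hs' ht'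
        have inner : C.pl s₀ ⊛ (b ⊛ C.pl t₀)
            = C.tw (b ⊛ (C.pl s₀ ⊛ C.pl t₀))
              (xor (xor (C.Av b (C.pl s₀) (C.pl t₀)) (C.Cv (C.pl s₀) b))
                (C.Av (C.pl s₀) b (C.pl t₀))) := by
          rw [C.tw_swap (C.av_spec (C.pl s₀) b (C.pl t₀)), C.cv_spec (C.pl s₀) b, C.tw_mul,
            C.av_spec b (C.pl s₀) (C.pl t₀), C.tw_tw, C.tw_tw]
          simp only [Bool.xor_assoc]
        have inner' : C.pl (s₀.map f) ⊛ (f b ⊛ C.pl (t₀.map f))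
            = C.tw (f b ⊛ (C.pl (s₀.map f) ⊛ C.pl (t₀.map f)))
              (xor (xor (C.Av b (C.pl s₀) (C.pl t₀)) (C.Cv (C.pl s₀) b))
                (C.Av (C.pl s₀) b (C.pl t₀))) := by
          rw [C.tw_swap (C.av_spec (C.pl (s₀.map f)) (f b) (C.pl (t₀.map f))),
            C.cv_spec (C.pl (s₀.map f)) (f b), C.tw_mul,
            C.av_spec (f b) (C.pl (s₀.map f)) (C.pl (t₀.map f)), C.tw_tw, C.tw_tw,
            C.av_pres_rel hf (C.rel_self b) (C.pcl hf s₀) (C.pcl hf t₀),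
            C.cv_pres_rel hf (C.pcl hf s₀) (C.rel_self b),
            C.av_pres_rel hf (C.pcl hf s₀) (C.rel_self b) (C.pcl hf t₀)]
          simp only [Bool.xor_assoc]
        -- outer associator
        have hbsq : f b ⊛ f b = f (b ⊛ b) := (C.half_sq hf b).symm
        rcases C.square_mem b with hb | hb
        · refine ⟨u₀, hu₀.cons b,
            xor (xor δ₀ (xor (xor (C.Av b (C.pl s₀) (C.pl t₀)) (C.Cv (C.pl s₀) b))
              (C.Av (C.pl s₀) b (C.pl t₀))))
              (C.Av b (C.pl s₀) (b ⊛ C.pl t₀)), ?_, ?_⟩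
          · show (b ⊛ C.pl s₀) ⊛ (b ⊛ C.pl t₀) = _
            rw [C.av_spec b (C.pl s₀) (b ⊛ C.pl t₀), inner, h1, C.mul_tw, C.mul_tw, C.mul_tw,
              ← C.LA b, hb, C.one_mul, C.tw_tw, C.tw_tw]
            simp only [pl_cons, List.map_cons, Bool.xor_assoc]
          · show (f b ⊛ C.pl (s₀.map f)) ⊛ (f b ⊛ C.pl (t₀.map f)) = _
            have hb' : f b ⊛ f b = C.one := by rw [hbsq, hb, C.half_one hf]
            rw [C.av_spec (f b) (C.pl (s₀.map f)) (f b ⊛ C.pl (t₀.map f)), inner', h2,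
              C.mul_tw, C.mul_tw, C.mul_tw, ← C.LA (f b), hb', C.one_mul, C.tw_tw, C.tw_tw,
              C.av_pres_rel hf (C.rel_self b) (C.pcl hf s₀)
                (C.rel_mul hf (C.rel_self b) (C.pcl hf t₀))]
            simp only [pl_cons, List.map_cons, Bool.xor_assoc]
        · refine ⟨u₀, hu₀.cons b,
            xor (xor (xor true δ₀) (xor (xor (C.Av b (C.pl s₀) (C.pl t₀))
              (C.Cv (C.pl s₀) b)) (C.Av (C.pl s₀) b (C.pl t₀))))
              (C.Av b (C.pl s₀) (b ⊛ C.pl t₀)), ?_, ?_⟩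
          · show (b ⊛ C.pl s₀) ⊛ (b ⊛ C.pl t₀) = _
            rw [C.av_spec b (C.pl s₀) (b ⊛ C.pl t₀), inner, h1, C.mul_tw, C.mul_tw, C.mul_tw,
              ← C.LA b, hb, C.neg_mul_comm (C.pl u₀),
              show C.pl u₀ ⊛ C.neg = C.tw (C.pl u₀) true from rfl,
              C.tw_tw, C.tw_tw, C.tw_tw]
            simp only [pl_cons, List.map_cons, Bool.xor_assoc]
          · show (f b ⊛ C.pl (s₀.map f)) ⊛ (f b ⊛ C.pl (t₀.map f)) = _
            have hb' : f b ⊛ f b = C.neg := by rw [hbsq, hb, C.half_neg hf]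
            rw [C.av_spec (f b) (C.pl (s₀.map f)) (f b ⊛ C.pl (t₀.map f)), inner', h2,
              C.mul_tw, C.mul_tw, C.mul_tw, ← C.LA (f b), hb', C.neg_mul_comm (C.pl (u₀.map f)),
              show C.pl (u₀.map f) ⊛ C.neg = C.tw (C.pl (u₀.map f)) true from rfl,
              C.tw_tw, C.tw_tw, C.tw_tw,
              C.av_pres_rel hf (C.rel_self b) (C.pcl hf s₀)
                (C.rel_mul hf (C.rel_self b) (C.pcl hf t₀))]
            simp only [pl_cons, List.map_cons, Bool.xor_assoc]

end
end CodeLoop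
namespace CodeLoop
open List

variable {α : Type*}

section
variable (C : CodeLoop α)

local infixl:70 " ⊛ " => C.mul

variable {f : α → α}

def inv (x : α) : α := x ⊛ (x ⊛ x)

lemma mul_inv (x : α) : x ⊛ C.inv x = C.one := by
  unfold inv
  rcases C.square_mem x with h | h <;> rw [h]
  · rw [C.mul_one, h]
  · rw [← C.neg_mul_assoc₃, h, C.neg_neg]

lemma inv_mul (x : α) : C.inv x ⊛ x = C.one := by
  unfold inv
  rcases C.square_mem x with h | h <;> rw [h]
  · rw [C.mul_one, h]
  · rw [C.neg_mul_assoc₂, C.neg_mul_comm, ← C.neg_mul_assoc₃, h, C.neg_neg]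

lemma gen_le {X T : Set α} (hX : X ⊆ T) (hT : C.toLoopStr.IsClosed T) :
    C.toLoopStr.gen X ⊆ T :=
  Set.sInter_subset_of_mem ⟨hX, hT⟩

lemma subset_gen {X : Set α} : X ⊆ C.toLoopStr.gen X := fun x hx =>
  Set.mem_sInter.mpr fun _ hT => hT.1 hx

lemma isClosed_of {T : Set α} (h1 : C.one ∈ T) (he : C.neg ∈ T)
    (hm : ∀ x ∈ T, ∀ y ∈ T, x ⊛ y ∈ T) : C.toLoopStr.IsClosed T := by
  have hinv : ∀ x ∈ T, C.inv x ∈ T := by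
    intro x hx
    rcases C.square_mem x with h | h <;> unfold inv <;> rw [h]
    · exact hm x hx _ h1
    · exact hm x hx _ he
  refine ⟨h1, hm, ?_, ?_⟩
  · intro x hx y hxy
    have : y = C.inv x := C.lcancel (a := x) (by rw [hxy, C.mul_inv])
    exact this ▸ hinv x hx
  · intro x hx y hxy
    have : y = C.inv x := C.rcancel (a := x) (by rw [hxy, C.inv_mul])
    exact this ▸ hinv x hx

lemma gen_closed (X : Set α) : C.toLoopStr.IsClosed (C.toLoopStr.gen X) := by
  refine ⟨?_, ?_, ?_, ?_⟩
  · exact Set.mem_sInter.mpr fun _ hT => hT.2.1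
  · intro x hx y hy
    exact Set.mem_sInter.mpr fun T hT => hT.2.2.1 x (hx T hT) y (hy T hT)
  · intro x hx y hxy
    exact Set.mem_sInter.mpr fun T hT => hT.2.2.2.1 x (hx T hT) y hxy
  · intro x hx y hxy
    exact Set.mem_sInter.mpr fun T hT => hT.2.2.2.2 x (hx T hT) y hxy

lemma pl_mem {T : Set α} (hT : C.toLoopStr.IsClosed T) {s : List α}
    (hs : ∀ x ∈ s, x ∈ T) : C.pl s ∈ T := by
  induction s with
  | nil => exact hT.1
  | cons a s ih =>
    exact hT.2.1 a (hs a (List.mem_cons_self)) _ (ih fun x hx => hs x (List.mem_cons_of_mem a hx))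

lemma half_id : C.toLoopStr.IsHalfAut (fun x : α => x) :=
  ⟨Function.bijective_id, fun _ _ => Or.inl rfl⟩

lemma span {B : Set α} (hB : C.toLoopStr.IsBasis B) {l : List α}
    (hl : ∀ b, b ∈ B ↔ b ∈ l) (x : α) :
    ∃ s, s <+ l ∧ ∃ δ, x = C.tw (C.pl s) δ := by
  set T : Set α := {x | ∃ s, s <+ l ∧ ∃ δ, x = C.tw (C.pl s) δ} with hT
  have hTc : C.toLoopStr.IsClosed T := by
    apply C.isClosed_of
    · exact ⟨[], List.nil_sublist l, false, rfl⟩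
    · refine ⟨[], List.nil_sublist l, true, ?_⟩
      show C.neg = C.tw C.one true
      rw [tw_true, C.one_mul]
    · rintro a ⟨s, hs, δ, rfl⟩ b ⟨t, ht, ε, rfl⟩
      obtain ⟨u, hu, γ, h1, _⟩ := C.merge (C.half_id) l s t hs ht
      refine ⟨u, hu, xor γ (xor ε δ), ?_⟩
      rw [C.tw_mul, C.mul_tw, h1, C.tw_tw, C.tw_tw]
  have hBT : B ⊆ T := by
    intro b hb
    exact ⟨[b], List.singleton_sublist.mpr ((hl b).1 hb), false, by
      show b = C.tw (b ⊛ C.one) false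
      rw [C.mul_one]; rfl⟩
  have : C.toLoopStr.gen B ⊆ T := C.gen_le hBT hTc
  have hx : x ∈ C.toLoopStr.gen B := by rw [hB.1]; trivial
  exact this hx

lemma swap_mul (a b w : α) : a ⊛ (b ⊛ w)
    = C.tw (b ⊛ (a ⊛ w)) (xor (C.Av b a w) (xor (C.Cv a b) (C.Av a b w))) := by
  rw [C.tw_swap (C.av_spec a b w), C.cv_spec a b, C.tw_mul, C.av_spec b a w,
    C.tw_tw, C.tw_tw]

lemma pull {b : α} : ∀ s : List α, b ∈ s → s.Nodup →
    ∃ s', (∀ x ∈ s', x ∈ s ∧ x ≠ b) ∧ ∃ γ, C.pl s = C.tw (b ⊛ C.pl s') γ := by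
  intro s
  induction s with
  | nil => intro h; exact absurd h List.not_mem_nil
  | cons a s₀ ih =>
    intro hb hnd
    rcases List.mem_cons.mp hb with hba | hb₀
    · subst hba
      refine ⟨s₀, ?_, false, rfl⟩
      intro x hx
      refine ⟨List.mem_cons_of_mem _ hx, ?_⟩
      rintro rfl
      exact (List.nodup_cons.mp hnd).1 hx
    · obtain ⟨s₀', hmem, γ, hγ⟩ := ih hb₀ (List.nodup_cons.mp hnd).2
      refine ⟨a :: s₀', ?_, xor (xor (C.Av b a (C.pl s₀')) (xor (C.Cv a b)
        (C.Av a b (C.pl s₀')))) γ, ?_⟩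
      · intro x hx
        rcases List.mem_cons.mp hx with hxa | hx'
        · subst hxa
          refine ⟨List.mem_cons_self, ?_⟩
          rintro rfl
          exact (List.nodup_cons.mp hnd).1 hb₀
        · exact ⟨List.mem_cons_of_mem a (hmem x hx').1, (hmem x hx').2⟩
      · show a ⊛ C.pl s₀ = _
        rw [hγ, C.mul_tw, C.swap_mul, C.tw_tw]
        simp only [pl_cons, Bool.xor_assoc]

lemma sublist_ext : ∀ (l : List α), l.Nodup → ∀ s t : List α, s <+ l → t <+ l →
    (∀ x, x ∈ s ↔ x ∈ t) → s = t := by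
  intro l
  induction l with
  | nil =>
    intro _ s t hs ht _
    rw [List.sublist_nil.mp hs, List.sublist_nil.mp ht]
  | cons a l₀ ih =>
    intro hnd s t hs ht hmem
    have hnd₀ := (List.nodup_cons.mp hnd).2
    have hal₀ := (List.nodup_cons.mp hnd).1
    cases hs with
    | cons _ hs' =>
      cases ht with
      | cons _ ht' => exact ih hnd₀ s t hs' ht' hmem
      | cons_cons _ ht' =>
        exfalso
        rename_i t₀
        exact hal₀ (hs'.subset ((hmem a).2 (List.mem_cons_self)))
    | cons_cons _ hs' =>
      rename_i s₀
      cases ht with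
      | cons _ ht' =>
        exfalso
        exact hal₀ (ht'.subset ((hmem a).1 (List.mem_cons_self)))
      | cons_cons _ ht' =>
        rename_i t₀
        congr 1
        apply ih hnd₀ s₀ t₀ hs' ht'
        intro x
        constructor
        · intro hx
          rcases List.mem_cons.mp ((hmem x).1 (List.mem_cons_of_mem a hx)) with rfl | h
          · exact absurd (hs'.subset hx) hal₀
          · exact h
        · intro hx
          rcases List.mem_cons.mp ((hmem x).2 (List.mem_cons_of_mem a hx)) with rfl | h
          · exact absurd (ht'.subset hx) hal₀
          · exact h

end
end CodeLoop
namespace CodeLoop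
open List

variable {α : Type*}

section
variable (C : CodeLoop α)

local infixl:70 " ⊛ " => C.mul

lemma inj_aux {B : Set α} (hB : C.toLoopStr.IsBasis B) {l : List α}
    (hl : ∀ b, b ∈ B ↔ b ∈ l) (hnd : l.Nodup) {s t : List α} {δ ε : Bool} {b : α}
    (hs : s <+ l) (ht : t <+ l)
    (hcol : C.tw (C.pl s) δ = C.tw (C.pl t) ε) (hbs : b ∈ s) (hbt : b ∉ t) : False := by
  have hbB : b ∈ B := (hl b).2 (hs.subset hbs)
  set Y : Set α := B \ {b} with hY
  set G : Set α := C.toLoopStr.gen Y with hG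
  have hGc : C.toLoopStr.IsClosed G := C.gen_closed Y
  have hYG : Y ⊆ G := C.subset_gen
  -- membership helper
  have memG : ∀ x, x ∈ l → x ≠ b → x ∈ G := by
    intro x hx hxb
    exact hYG ⟨(hl x).2 hx, hxb⟩
  -- pull b out of s
  obtain ⟨s', hs'mem, γ, hγ⟩ := C.pull s hbs (hnd.sublist hs)
  have hs'G : ∀ x ∈ s', x ∈ G := fun x hx =>
    memG x (hs.subset (hs'mem x hx).1) (hs'mem x hx).2
  have hq : C.pl s' ∈ G := C.pl_mem hGc hs'G
  have hw : C.pl t ∈ G := C.pl_mem hGc (fun x hx => memG x (ht.subset hx)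
    (fun hxb => hbt (hxb ▸ hx)))
  -- from the collision, express b ⊛ pl s' as a twist of pl t
  have hbq : b ⊛ C.pl s' = C.tw (C.pl t) (xor ε (xor γ δ)) := by
    rw [hγ, C.tw_tw] at hcol
    have := C.tw_swap hcol.symm
    rw [this, C.tw_tw]
  -- solve for b
  set q := C.pl s' with hqdef
  set w := C.pl t with hwdef
  set z := w ⊛ C.inv q with hz
  have hzG : z ∈ G := hGc.2.1 w hw _ (hGc.2.1 q hq _ (hGc.2.1 q hq q hq))
  have hsolve : (z ⊛ q) = C.tw w (C.Av w (C.inv q) q) := by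
    rw [hz, C.av_spec w (C.inv q) q, C.inv_mul, C.mul_one]
  have hb_eq : ∃ κ, b = C.tw z κ := by
    refine ⟨xor (C.Av w (C.inv q) q) (xor ε (xor γ δ)), ?_⟩
    apply C.rcancel (a := q)
    rw [hbq, C.tw_mul, hsolve, C.tw_tw]
    congr 1
    cases C.Av w (C.inv q) q <;> cases γ <;> cases δ <;> cases ε <;> decide
  obtain ⟨κ, hbz⟩ := hb_eq
  -- C.neg lies in G
  have hneg : C.neg ∈ G := by
    obtain ⟨x₀, hx₀⟩ := C.neg_is_square
    obtain ⟨sx, hsx, δx, hx₀eq⟩ := C.span hB hl x₀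
    have hxx : C.neg = C.pl sx ⊛ C.pl sx := by
      rw [← hx₀, hx₀eq, C.sq_tw]
    by_cases hbsx : b ∈ sx
    · obtain ⟨sx', hsx'mem, γ₂, hγ₂⟩ := C.pull sx hbsx (hnd.sublist hsx)
      have hsx'G : C.pl sx' ∈ G := C.pl_mem hGc (fun x hx =>
        memG x (hsx.subset (hsx'mem x hx).1) (hsx'mem x hx).2)
      have : C.neg = (z ⊛ C.pl sx') ⊛ (z ⊛ C.pl sx') := by
        rw [hxx, hγ₂, C.sq_tw, hbz, C.tw_mul, C.sq_tw]
      rw [this]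
      have hzsx : z ⊛ C.pl sx' ∈ G := hGc.2.1 z hzG _ hsx'G
      exact hGc.2.1 _ hzsx _ hzsx
    · have hsxG : C.pl sx ∈ G := C.pl_mem hGc (fun x hx =>
        memG x (hsx.subset hx) (fun hxb => hbsx (hxb ▸ hx)))
      rw [hxx]
      exact hGc.2.1 _ hsxG _ hsxG
  -- b lies in G
  have hbG : b ∈ G := by
    rw [hbz]
    cases κ
    · exact hzG
    · exact hGc.2.1 z hzG _ hneg
  -- Y generates
  have hBG : B ⊆ G := by
    intro x hx
    by_cases hxb : x = b
    · exact hxb ▸ hbG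
    · exact hYG ⟨hx, hxb⟩
  have huniv : C.toLoopStr.Generates Y := by
    have h1 : C.toLoopStr.gen B ⊆ G := C.gen_le hBG hGc
    rw [hB.1] at h1
    exact Set.eq_univ_of_univ_subset h1
  exact hB.2 Y ⟨Set.diff_subset, fun hsub => (hsub hbB).2 rfl⟩ huniv

lemma inj {B : Set α} (hB : C.toLoopStr.IsBasis B) {l : List α}
    (hl : ∀ b, b ∈ B ↔ b ∈ l) (hnd : l.Nodup) {s t : List α} {δ ε : Bool}
    (hs : s <+ l) (ht : t <+ l)
    (hcol : C.tw (C.pl s) δ = C.tw (C.pl t) ε) : s = t ∧ δ = ε := by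
  by_cases hst : s = t
  · subst hst
    exact ⟨rfl, C.tw_cancel hcol⟩
  · exfalso
    have : ¬ ∀ x, x ∈ s ↔ x ∈ t := fun h => hst (sublist_ext l hnd s t hs ht h)
    push_neg at this
    obtain ⟨x, hx⟩ := this
    rcases hx with ⟨hxs, hxt⟩ | ⟨hxs, hxt⟩
    · exact C.inj_aux hB hl hnd hs ht hcol hxs hxt
    · exact C.inj_aux hB hl hnd ht hs hcol.symm hxt hxs

end
end CodeLoop
namespace CodeLoop
open List

variable {α : Type*}

section
variable (C : CodeLoop α)

local infixl:70 " ⊛ " => C.mul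

variable {f : α → α}

lemma aut_to_half {g : α → α} (hg : C.toLoopStr.IsAut g) : C.toLoopStr.IsHalfAut g :=
  ⟨hg.1, fun x y => Or.inl (hg.2 x y)⟩

lemma aut_comp_half {g h : α → α} (hg : C.toLoopStr.IsAut g)
    (hh : C.toLoopStr.IsHalfAut h) : C.toLoopStr.IsHalfAut (g ∘ h) := by
  refine ⟨hg.1.comp hh.1, fun x y => ?_⟩
  rcases hh.2 x y with h1 | h1
  · exact Or.inl (by show g _ = _; rw [h1, hg.2]; rfl)
  · exact Or.inr (by show g _ = _; rw [h1, hg.2]; rfl)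

lemma aut_inv {g : α → α} (hg : C.toLoopStr.IsAut g) :
    C.toLoopStr.IsAut ⇑(Equiv.ofBijective g hg.1).symm := by
  set E := Equiv.ofBijective g hg.1 with hE
  refine ⟨E.symm.bijective, fun x y => ?_⟩
  apply hg.1.1
  have hgE : ∀ z, g (E.symm z) = z := fun z => E.apply_symm_apply z
  show g (E.symm (x ⊛ y)) = g (E.symm x ⊛ E.symm y)
  rw [hgE, hg.2, hgE, hgE]

lemma aut_ext {B : Set α} (hB : C.toLoopStr.IsBasis B) {g g' : α → α}
    (hg : C.toLoopStr.IsAut g) (hg' : C.toLoopStr.IsAut g')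
    (hagree : ∀ b ∈ B, g b = g' b) : g = g' := by
  set T : Set α := {x | g x = g' x} with hT
  have hTc : C.toLoopStr.IsClosed T := by
    apply C.isClosed_of
    · show g C.one = g' C.one
      rw [C.half_one (C.aut_to_half hg), C.half_one (C.aut_to_half hg')]
    · show g C.neg = g' C.neg
      rw [C.half_neg (C.aut_to_half hg), C.half_neg (C.aut_to_half hg')]
    · intro x hx y hy
      show g (x ⊛ y) = g' (x ⊛ y)
      rw [hg.2, hg'.2, hx, hy]
  have : C.toLoopStr.gen B ⊆ T := C.gen_le (fun b hb => hagree b hb) hTc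
  funext x
  have hx : x ∈ C.toLoopStr.gen B := by rw [hB.1]; trivial
  exact this hx

lemma exists_aut_agreeing {B : Set α} (hB : C.toLoopStr.IsBasis B) {l : List α}
    (hl : ∀ b, b ∈ B ↔ b ∈ l) (hnd : l.Nodup) (hf : C.toLoopStr.IsHalfAut f) :
    ∃ g : α → α, C.toLoopStr.IsAut g ∧ ∀ b ∈ B, g b = f b := by
  haveI : Finite α := C.finite
  let r : {s : List α // s <+ l} × Bool → α := fun d => C.tw (C.pl d.1.1) d.2
  have hrinj : Function.Injective r := by
    rintro ⟨⟨s, hs⟩, δ⟩ ⟨⟨t, ht⟩, ε⟩ h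
    obtain ⟨h1, h2⟩ := C.inj hB hl hnd hs ht h
    subst h1
    subst h2
    rfl
  have hrsurj : Function.Surjective r := by
    intro x
    obtain ⟨s, hs, δ, hx⟩ := C.span hB hl x
    exact ⟨⟨⟨s, hs⟩, δ⟩, hx.symm⟩
  have hrbij : Function.Bijective r := ⟨hrinj, hrsurj⟩
  set E := Equiv.ofBijective r hrbij with hEdef
  let g : α → α := fun x => C.tw (C.pl (((E.symm x).1.1).map f)) (E.symm x).2
  have hg_r : ∀ d, g (r d) = C.tw (C.pl (d.1.1.map f)) d.2 := by
    intro d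
    have hEd : E d = r d := rfl
    show C.tw (C.pl (((E.symm (r d)).1.1).map f)) (E.symm (r d)).2 = _
    rw [← hEd, E.symm_apply_apply]
  have hgsurj : Function.Surjective g := by
    intro x
    obtain ⟨y, rfl⟩ := hf.1.2 x
    obtain ⟨s, hs, δ, hy⟩ := C.span hB hl y
    obtain ⟨β, hβ⟩ := C.pcl hf s
    refine ⟨r ⟨⟨s, hs⟩, xor β δ⟩, ?_⟩
    rw [hg_r ⟨⟨s, hs⟩, xor β δ⟩]
    show C.tw (C.pl (s.map f)) (xor β δ) = f y
    rw [hy, C.half_tw hf, C.tw_swap hβ, C.tw_tw]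
  have hgbij : Function.Bijective g :=
    ⟨Finite.injective_iff_surjective.mpr hgsurj, hgsurj⟩
  have hgmul : ∀ x y, g (x ⊛ y) = g x ⊛ g y := by
    intro x y
    obtain ⟨s, hs, δ, hx⟩ := C.span hB hl x
    obtain ⟨t, ht, ε, hy⟩ := C.span hB hl y
    obtain ⟨u, hu, γ, h1, h2⟩ := C.merge hf l s t hs ht
    have hxy : x ⊛ y = r ⟨⟨u, hu⟩, xor γ (xor ε δ)⟩ := by
      rw [hx, hy]
      show _ = C.tw (C.pl u) _
      rw [C.tw_mul, C.mul_tw, h1, C.tw_tw, C.tw_tw]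
    have hgx : g x = C.tw (C.pl (s.map f)) δ := by
      rw [show x = r ⟨⟨s, hs⟩, δ⟩ from hx]
      exact hg_r _
    have hgy : g y = C.tw (C.pl (t.map f)) ε := by
      rw [show y = r ⟨⟨t, ht⟩, ε⟩ from hy]
      exact hg_r _
    rw [hxy, hg_r _, hgx, hgy, C.tw_mul, C.mul_tw, h2, C.tw_tw, C.tw_tw]
  refine ⟨g, ⟨hgbij, hgmul⟩, ?_⟩
  intro b hb
  have hbl : [b] <+ l := List.singleton_sublist.mpr ((hl b).1 hb)
  have hrb : r ⟨⟨[b], hbl⟩, false⟩ = b := by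
    show C.tw (b ⊛ C.one) false = b
    rw [C.mul_one]; rfl
  have hgb := hg_r ⟨⟨[b], hbl⟩, false⟩
  rw [hrb] at hgb
  rw [hgb]
  show f b ⊛ C.one = f b
  exact C.mul_one (f b)

end
end CodeLoop
/-- `|Half(L)| = |Aut(L)| · |H_B(L)|` for a code loop `L` with basis `B`. -/
theorem stmt11 {α : Type*} (C : CodeLoop α) (B : Set α) (hB : C.toLoopStr.IsBasis B) :
    Nat.card {f : α → α // C.toLoopStr.IsHalfAut f} =
      Nat.card {f : α → α // C.toLoopStr.IsAut f} *
        Nat.card {f : α → α // C.toLoopStr.IsHalfAut f ∧ ∀ b ∈ B, f b = b} := by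
  classical
  haveI : Finite α := C.finite
  have hBfin : B.Finite := Set.toFinite B
  set l := hBfin.toFinset.toList with hldef
  have hnd : l.Nodup := Finset.nodup_toList _
  have hl : ∀ b, b ∈ B ↔ b ∈ l := by
    intro b
    rw [hldef, Finset.mem_toList, Set.Finite.mem_toFinset]
  let Φ : {f : α → α // C.toLoopStr.IsAut f} ×
      {f : α → α // C.toLoopStr.IsHalfAut f ∧ ∀ b ∈ B, f b = b} →
      {f : α → α // C.toLoopStr.IsHalfAut f} :=
    fun p => ⟨p.1.1 ∘ p.2.1, C.aut_comp_half p.1.2 p.2.2.1⟩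
  have hbij : Function.Bijective Φ := by
    constructor
    · rintro ⟨⟨g1, hg1⟩, ⟨h1, hh1, hfix1⟩⟩ ⟨⟨g2, hg2⟩, ⟨h2, hh2, hfix2⟩⟩ heq
      have hfun : g1 ∘ h1 = g2 ∘ h2 := congrArg Subtype.val heq
      have hagree : ∀ b ∈ B, g1 b = g2 b := by
        intro b hb
        have hcf := congrFun hfun b
        simp only [Function.comp_apply, hfix1 b hb, hfix2 b hb] at hcf
        exact hcf
      have hg : g1 = g2 := C.aut_ext hB hg1 hg2 hagree
      have hh : h1 = h2 := by
        funext x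
        have hcf := congrFun hfun x
        simp only [Function.comp_apply] at hcf
        rw [hg] at hcf
        exact hg2.1.1 hcf
      subst hg
      subst hh
      rfl
    · rintro ⟨f, hf⟩
      obtain ⟨g, hg, hagree⟩ := C.exists_aut_agreeing hB hl hnd hf
      set E := Equiv.ofBijective g hg.1 with hEdef
      have hginv : C.toLoopStr.IsAut ⇑E.symm := C.aut_inv hg
      have hh : C.toLoopStr.IsHalfAut (⇑E.symm ∘ f) := C.aut_comp_half hginv hf
      have hfix : ∀ b ∈ B, (⇑E.symm ∘ f) b = b := by
        intro b hb
        show E.symm (f b) = b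
        rw [← hagree b hb]
        have hEb : E b = g b := rfl
        rw [← hEb, E.symm_apply_apply]
      refine ⟨⟨⟨g, hg⟩, ⟨⇑E.symm ∘ f, hh, hfix⟩⟩, ?_⟩
      apply Subtype.ext
      show g ∘ (⇑E.symm ∘ f) = f
      funext x
      show g (E.symm (f x)) = f x
      have hEx : g (E.symm (f x)) = E (E.symm (f x)) := rfl
      rw [hEx, E.apply_symm_apply]
  calc Nat.card {f : α → α // C.toLoopStr.IsHalfAut f}
      = Nat.card ({f : α → α // C.toLoopStr.IsAut f} ×
          {f : α → α // C.toLoopStr.IsHalfAut f ∧ ∀ b ∈ B, f b = b}) :=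
        (Nat.card_congr (Equiv.ofBijective Φ hbij)).symm
    _ = _ := Nat.card_prod _ _
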